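/- arXiv:2007.06455 — 4 statements merged into one kernel-verified Lean document; each statement's English description precedes it below -/
import Mathlib

section
/- For any graph U, any integer m ≥ 0, and any h ≤ χ₂(U), the (h,m)-boost U^{(h,m)} of U satisfies χ₂(U^{(h,m)}) ≥ hm + 1. -/
open SimpleGraph

def IsLRanking {V : Type*} (G : SimpleGraph V) (ℓ : ℕ) (φ : V → ℕ) : Prop :=
  ∀ ⦃u v : V⦄ (p : G.Walk u v), p.IsPath → 1 ≤ p.length → p.length ≤ ℓ →
    φ u ≠ φ v ∨ ∃ w ∈ p.support, φ u < φ w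

noncomputable def rankingNumber {V : Type*} (G : SimpleGraph V) (ℓ : ℕ) : ℕ :=
  sInf {k | ∃ φ : V → ℕ, IsLRanking G ℓ φ ∧ ∀ v, φ v ∈ Finset.Icc 1 k}


lemma walk_ne_of_isPath {V : Type*} {G : SimpleGraph V} {u v : V} (p : G.Walk u v)
    (hp : p.IsPath) (hl : 1 ≤ p.length) : u ≠ v := by
  rintro rfl
  cases p with
  | nil => simp at hl
  | cons h q =>
    have := hp.support_nodup
    rw [SimpleGraph.Walk.support_cons] at this
    exact (List.nodup_cons.mp this).1 (SimpleGraph.Walk.end_mem_support q)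

lemma rankingSet_nonempty {V : Type*} [Finite V] (G : SimpleGraph V) (ℓ : ℕ) :
    {k | ∃ φ : V → ℕ, IsLRanking G ℓ φ ∧ ∀ v, φ v ∈ Finset.Icc 1 k}.Nonempty := by
  obtain ⟨n, ⟨e⟩⟩ := Finite.exists_equiv_fin V
  refine ⟨n, fun v => (e v : ℕ) + 1, ?_, fun v => ?_⟩
  · intro u v p hp h1 h2
    left
    have := walk_ne_of_isPath p hp h1
    simp only [ne_eq, Nat.add_right_cancel_iff]
    intro hc
    exact this (e.injective (Fin.ext hc))
  · simp only [Finset.mem_Icc]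
    exact ⟨Nat.le_add_left _ _, Nat.succ_le_of_lt (e v).isLt⟩

lemma isLRanking_comp {α β : Type*} {U : SimpleGraph α} {G : SimpleGraph β} (f : U →g G)
    (hf : Function.Injective f) {φ : β → ℕ} (hφ : IsLRanking G 2 φ) :
    IsLRanking U 2 (fun v => φ (f v)) := by
  intro u v p hp h1 h2
  have := hφ (p.map f) (SimpleGraph.Walk.map_isPath_of_injective hf hp) (by rwa [SimpleGraph.Walk.length_map])
    (by rwa [SimpleGraph.Walk.length_map])
  rcases this with h | ⟨w, hw, hlt⟩
  · exact Or.inl h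
  · rw [SimpleGraph.Walk.support_map, List.mem_map] at hw
    obtain ⟨w', hw', rfl⟩ := hw
    exact Or.inr ⟨w', hw', hlt⟩

lemma rankingNumber_le_of_bounds {α : Type*} (U : SimpleGraph α) {ψ : α → ℕ} {c b : ℕ}
    (hψ : IsLRanking U 2 ψ) (hc : ∀ v, c ≤ ψ v) (hb : ∀ v, ψ v ≤ b) :
    rankingNumber U 2 ≤ b + 1 - c := by
  apply Nat.sInf_le
  refine ⟨fun v => ψ v + 1 - c, ?_, fun v => ?_⟩
  · intro u v p hp h1 h2
    rcases hψ p hp h1 h2 with h | ⟨w, hw, hlt⟩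
    · left; show ψ u + 1 - c ≠ ψ v + 1 - c; have := hc u; have := hc v; omega
    · right; exact ⟨w, hw, show ψ u + 1 - c < ψ w + 1 - c by have := hc u; omega⟩
  · simp only [Finset.mem_Icc]
    have := hc v; have := hb v; omega

/-- The `(h,m)`-boost of `U`.  Vertices are sequences recording, for each ancestor step,
which of the `h*m+1` copies of `U` was entered and at which vertex of `U`; the empty list
is the root `a₀` (the single vertex of layer `L₀`), and lists of length `i ≤ m` are the
vertices of layer `L_i`.  A vertex is adjacent to every vertex of each of its child
copies, and two vertices in the same copy are adjacent iff they are adjacent in `U`. -/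
def boost {α : Type*} (U : SimpleGraph α) (h m : ℕ) :
    SimpleGraph {l : List (Fin (h * m + 1) × α) // l.length ≤ m} where
  Adj x y :=
    (∃ p, y.1 = x.1 ++ [p]) ∨ (∃ p, x.1 = y.1 ++ [p]) ∨
      (∃ (l : List (Fin (h * m + 1) × α)) (p q : Fin (h * m + 1) × α),
        x.1 = l ++ [p] ∧ y.1 = l ++ [q] ∧ p.1 = q.1 ∧ U.Adj p.2 q.2)
  symm := by
    constructor
    rintro x y (⟨p, hp⟩ | ⟨p, hp⟩ | ⟨l, p, q, h1, h2, h3, h4⟩)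
    · exact Or.inr (Or.inl ⟨p, hp⟩)
    · exact Or.inl ⟨p, hp⟩
    · exact Or.inr (Or.inr ⟨l, q, p, h2, h1, h3.symm, h4.symm⟩)
  loopless := by
    constructor
    rintro x (⟨p, hp⟩ | ⟨p, hp⟩ | ⟨l, p, q, h1, h2, h3, h4⟩)
    · have := congrArg List.length hp; simp at this
    · have := congrArg List.length hp; simp at this
    · rw [h1] at h2
      have : p = q := by
        have := List.append_inj_right h2 rfl
        simpa using this
      exact h4.ne (congrArg Prod.snd this)

/-- If `h ≤ χ₂(U)` then `χ₂(U^{(h,m)}) ≥ h·m + 1`. -/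
theorem boost_ranking_lower_bound {α : Type*} [Fintype α] (U : SimpleGraph α)
    (h m : ℕ) (hh : h ≤ rankingNumber U 2) :
    h * m + 1 ≤ rankingNumber (boost U h m) 2 := by
  classical
  haveI : Finite {l : List (Fin (h * m + 1) × α) // l.length ≤ m} :=
    (List.finite_length_le _ m).to_subtype
  apply le_csInf (rankingSet_nonempty _ _)
  rintro k ⟨φ, hφ, hk⟩
  by_contra hcon
  push_neg at hcon
  -- basic facts
  have root : {l : List (Fin (h * m + 1) × α) // l.length ≤ m} := ⟨[], by simp⟩
  have hroot := Finset.mem_Icc.mp (hk ⟨[], by simp⟩)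
  have hk1 : 1 ≤ k := hroot.1.trans hroot.2
  have hkm : k ≤ h * m := by omega
  have hpos : 1 ≤ h := by
    rcases Nat.eq_zero_or_pos h with h0 | h1
    · subst h0; simp at hkm; omega
    · exact h1
  have hαne : Nonempty α := by
    by_contra hα
    have : rankingNumber U 2 ≤ 0 := Nat.sInf_le
      ⟨fun v => (hα ⟨v⟩).elim, fun u => (hα ⟨u⟩).elim, fun v => (hα ⟨v⟩).elim⟩
    omega
  -- edge lemma
  have hne : ∀ x y, (boost U h m).Adj x y → φ x ≠ φ y := by
    intro x y hxy hc
    have hp : (SimpleGraph.Walk.cons hxy SimpleGraph.Walk.nil).IsPath := by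
      simp [SimpleGraph.Walk.isPath_def, hxy.ne]
    rcases hφ _ hp (by simp) (by simp) with hd | ⟨w, hw, hlt⟩
    · exact hd hc
    · simp only [SimpleGraph.Walk.support_cons, SimpleGraph.Walk.support_nil,
        List.mem_cons, List.mem_singleton, List.not_mem_nil, or_false] at hw
      rcases hw with rfl | rfl <;> omega
  -- length-2 path lemma
  have htwo : ∀ x y z, (boost U h m).Adj x y → (boost U h m).Adj y z → x ≠ z →
      φ x = φ z → φ x < φ y := by
    intro x y z h1 h2 hxz hc
    have hp : (SimpleGraph.Walk.cons h1 (SimpleGraph.Walk.cons h2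
        SimpleGraph.Walk.nil)).IsPath := by
      simp [SimpleGraph.Walk.isPath_def, h1.ne, h2.ne, hxz]
    rcases hφ _ hp (by simp) (by simp) with hd | ⟨w, hw, hlt⟩
    · exact absurd hc hd
    · simp only [SimpleGraph.Walk.support_cons, SimpleGraph.Walk.support_nil,
        List.mem_cons, List.not_mem_nil, or_false] at hw
      have hxy := hne x y h1
      rcases hw with rfl | rfl | rfl
      · omega
      · exact hlt
      · omega
  -- main induction
  have key : ∀ i, i ≤ m → ∃ a : {l : List (Fin (h * m + 1) × α) // l.length ≤ m},
      a.1.length = i ∧ φ a + h * i ≤ k := by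
    intro i
    induction i with
    | zero =>
      intro _
      exact ⟨⟨[], by simp⟩, by simp, by simpa using (Finset.mem_Icc.mp (hk ⟨[], by simp⟩)).2⟩
    | succ i ih =>
      intro him
      obtain ⟨a, hlen, hbound⟩ := ih (by omega)
      set ι : Fin (h * m + 1) → α → {l : List (Fin (h * m + 1) × α) // l.length ≤ m} :=
        fun j v => ⟨a.1 ++ [(j, v)], by
          simp only [List.length_append, List.length_singleton, hlen]; exact him⟩ with hι
      have hinj_pair : ∀ j v j' v', ι j v = ι j' v' → (j, v) = (j', v') := by
        intro j v j' v' hEq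
        have h1 := congrArg Subtype.val hEq
        simp only [hι] at h1
        have := List.append_cancel_left h1
        simpa using this
      have hadj : ∀ j v, (boost U h m).Adj a (ι j v) := fun j v => Or.inl ⟨(j, v), rfl⟩
      have ha1 := (Finset.mem_Icc.mp (hk a)).1
      -- bad copies
      set B : Finset (Fin (h * m + 1)) :=
        Finset.univ.filter (fun j => ∃ v, φ a ≤ φ (ι j v)) with hB
      set g : Fin (h * m + 1) → ℕ :=
        fun j => if hj : ∃ v, φ a ≤ φ (ι j v) then φ (ι j hj.choose) else 0 with hg
      have hcard : B.card ≤ (Finset.Ioc (φ a) k).card := by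
        apply Finset.card_le_card_of_injOn g
        · intro j hj
          rw [Finset.mem_coe, hB, Finset.mem_filter] at hj
          obtain ⟨-, hj⟩ := hj
          rw [hg]
          simp only [dif_pos hj]
          have h1 := hj.choose_spec
          have h2 := hne a (ι j hj.choose) (hadj j hj.choose)
          have h3 := (Finset.mem_Icc.mp (hk (ι j hj.choose))).2
          rw [Finset.mem_coe, Finset.mem_Ioc]
          omega
        · intro j hj j' hj' hgj
          by_contra hjj
          rw [Finset.mem_coe, hB, Finset.mem_filter] at hj hj'
          obtain ⟨-, hj⟩ := hj
          obtain ⟨-, hj'⟩ := hj'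
          rw [hg] at hgj
          simp only [dif_pos hj, dif_pos hj'] at hgj
          have huv : ι j hj.choose ≠ ι j' hj'.choose := by
            intro hEq
            have := hinj_pair _ _ _ _ hEq
            exact hjj (congrArg Prod.fst this)
          have := htwo _ _ _ ((hadj j hj.choose).symm) (hadj j' hj'.choose) huv hgj
          have := hj.choose_spec
          omega
      have hlt : B.card < Fintype.card (Fin (h * m + 1)) := by
        rw [Nat.card_Ioc] at hcard
        rw [Fintype.card_fin]
        omega
      obtain ⟨j₀, hj₀⟩ : ∃ j₀, j₀ ∉ B := by
        by_contra hall
        push_neg at hall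
        have : B = Finset.univ := Finset.eq_univ_iff_forall.mpr hall
        rw [this, Finset.card_univ] at hlt
        omega
      have hj₀' : ∀ v, φ (ι j₀ v) < φ a := by
        rw [hB, Finset.mem_filter] at hj₀
        push_neg at hj₀
        intro v
        exact hj₀ (Finset.mem_univ j₀) v
      -- the copy j₀ is a 2-ranking of U with small colours
      have finj : Function.Injective (fun v => ι j₀ v) := by
        intro u v hEq
        have := hinj_pair _ _ _ _ hEq
        simpa using congrArg Prod.snd this
      have fadj : ∀ {u v : α}, U.Adj u v → (boost U h m).Adj (ι j₀ u) (ι j₀ v) := by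
        intro u v huv
        exact Or.inr (Or.inr ⟨a.1, (j₀, u), (j₀, v), rfl, rfl, rfl, huv⟩)
      have hψ : IsLRanking U 2 (fun v => φ (ι j₀ v)) :=
        isLRanking_comp ⟨fun v => ι j₀ v, fadj⟩ finj hφ
      obtain ⟨v₀, -, hv₀⟩ := Finset.exists_min_image Finset.univ
        (fun v => φ (ι j₀ v)) (Finset.univ_nonempty)
      have hub : ∀ v, φ (ι j₀ v) ≤ φ a - 1 := fun v => by have := hj₀' v; omega
      have hlbb : ∀ v, φ (ι j₀ v₀) ≤ φ (ι j₀ v) := fun v => hv₀ v (Finset.mem_univ v)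
      have hrank := rankingNumber_le_of_bounds U hψ hlbb hub
      have hstep : φ (ι j₀ v₀) + h ≤ φ a := by
        have := hj₀' v₀
        have hv1 := (Finset.mem_Icc.mp (hk (ι j₀ v₀))).1
        omega
      refine ⟨ι j₀ v₀, ?_, ?_⟩
      · simp only [hι, List.length_append, List.length_singleton, hlen]
      · have hmul : h * (i + 1) = h * i + h := Nat.mul_succ h i
        omega
  obtain ⟨a, -, ha⟩ := key m le_rfl
  have := (Finset.mem_Icc.mp (hk a)).1
  omega
end

section
/- For any graph G and any integer ℓ ≥ 1, χ_ℓ(G) ≤ (ℓ+1)·pw(G) + 1, where pw(G) denotes the pathwidth of G. -/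
open SimpleGraph

/-- A tree decomposition (more generally, an `X`-decomposition) of `G` indexed by the
vertices of a graph `T`: each vertex's set of bags induces a connected subgraph of `T`,
and each edge of `G` is contained in some bag. -/
structure TreeDecomp {V X : Type*} (G : SimpleGraph V) (T : SimpleGraph X) where
  bag : X → Set V
  subtree : ∀ v : V, (T.induce {x | v ∈ bag x}).Connected
  covers : ∀ ⦃u v : V⦄, G.Adj u v → ∃ x, u ∈ bag x ∧ v ∈ bag x

/-- `G` has a tree decomposition of width at most `t`. -/
def HasTreewidthAtMost {V : Type*} (G : SimpleGraph V) (t : ℕ) : Prop :=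
  ∃ (X : Type) (T : SimpleGraph X), T.IsTree ∧
    ∃ D : TreeDecomp G T, ∀ x, (D.bag x).ncard ≤ t + 1

/-- The treewidth of `G`. -/
noncomputable def treewidth {V : Type*} (G : SimpleGraph V) : ℕ :=
  sInf {t | HasTreewidthAtMost G t}

/-- `G` has a path decomposition (a tree decomposition whose underlying tree is a path)
of width at most `t`. -/
def HasPathwidthAtMost {V : Type*} (G : SimpleGraph V) (t : ℕ) : Prop :=
  ∃ (n : ℕ) (D : TreeDecomp G (SimpleGraph.pathGraph n)),
    ∀ x, (D.bag x).ncard ≤ t + 1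

/-- The pathwidth of `G`. -/
noncomputable def pathwidth {V : Type*} (G : SimpleGraph V) : ℕ :=
  sInf {t | HasPathwidthAtMost G t}


namespace LRankAux
open scoped Classical

variable {V : Type*} [Fintype V]

/-- vertices of `A` whose interval contains point `x`. -/
def bagSet (l r : V → ℕ) (A : Set V) (x : ℕ) : Set V := {v | v ∈ A ∧ l v ≤ x ∧ x ≤ r v}

noncomputable def pickMax (r : V → ℕ) (C : Set V) (hC : C.Nonempty) : V :=
  ((Set.exists_max_image C r C.toFinite) hC).choose

lemma pickMax_mem (r : V → ℕ) (C : Set V) (hC : C.Nonempty) : pickMax r C hC ∈ C :=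
  ((Set.exists_max_image C r C.toFinite) hC).choose_spec.1

lemma pickMax_max (r : V → ℕ) (C : Set V) (hC : C.Nonempty) :
    ∀ v ∈ C, r v ≤ r (pickMax r C hC) :=
  ((Set.exists_max_image C r C.toFinite) hC).choose_spec.2

variable (l r : V → ℕ)

/-- one step of the greedy chain -/
noncomputable def stepv (A : Set V) (s : V) : Option V :=
  if h : {v | v ∈ A ∧ r s < l v}.Nonempty ∧
      (bagSet l r A (sInf (l '' {v | v ∈ A ∧ r s < l v}))).Nonempty then
    some (pickMax r _ h.2)
  else none

lemma stepv_eq_some {A : Set V} {s s' : V} (h : stepv l r A s = some s') :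
    ∃ q : ℕ, (∀ v ∈ A, r s < l v → q ≤ l v) ∧ r s < q ∧ s' ∈ bagSet l r A q ∧
      (∀ v ∈ bagSet l r A q, r v ≤ r s') := by
  unfold stepv at h
  split_ifs at h with hcond
  · obtain ⟨h1, h2⟩ := hcond
    set q := sInf (l '' {v | v ∈ A ∧ r s < l v}) with hq
    refine ⟨q, ?_, ?_, ?_, ?_⟩
    · intro v hv hlv
      exact Nat.sInf_le ⟨v, ⟨hv, hlv⟩, rfl⟩
    · obtain ⟨y, ⟨⟨hyA, hys⟩, hyq⟩⟩ := Nat.sInf_mem (h1.image l)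
      omega
    · simpa using (Option.some_injective _ h) ▸ pickMax_mem r _ h2
    · intro v hv
      have := pickMax_max r _ h2 v hv
      simpa using (Option.some_injective _ h) ▸ this

lemma stepv_progress {A : Set V} (hlr : ∀ v, l v ≤ r v) {s v : V} (hv : v ∈ A)
    (hlv : r s < l v) : ∃ s', stepv l r A s = some s' := by
  have h1 : {v | v ∈ A ∧ r s < l v}.Nonempty := ⟨v, hv, hlv⟩
  have h2 : (bagSet l r A (sInf (l '' {v | v ∈ A ∧ r s < l v}))).Nonempty := by
    obtain ⟨y, hy, hyq⟩ := Nat.sInf_mem (h1.image l)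
    exact ⟨y, hy.1, le_of_eq hyq, hyq ▸ hlr y⟩
  exact ⟨_, by unfold stepv; rw [dif_pos ⟨h1, h2⟩]⟩

/-- greedy chain of vertices with maximal right endpoints -/
noncomputable def chain (A : Set V) : ℕ → Option V
  | 0 => if h : (bagSet l r A (sInf (l '' A))).Nonempty then some (pickMax r _ h) else none
  | (k+1) => (chain A k).bind (stepv l r A)

lemma chain_zero {A : Set V} (hlr : ∀ v, l v ≤ r v) (hA : A.Nonempty) :
    ∃ s, chain l r A 0 = some s ∧ ∀ v ∈ A, l s ≤ l v := by
  have h : (bagSet l r A (sInf (l '' A))).Nonempty := by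
    obtain ⟨y, hy, hyq⟩ := Nat.sInf_mem (hA.image l)
    exact ⟨y, hy, le_of_eq hyq, hyq ▸ hlr y⟩
  refine ⟨pickMax r _ h, by unfold chain; rw [dif_pos h], fun v hv => ?_⟩
  have := (pickMax_mem r _ h).2.1
  exact le_trans this (Nat.sInf_le ⟨v, hv, rfl⟩)

lemma chain_mem {A : Set V} : ∀ {k : ℕ} {s : V}, chain l r A k = some s → s ∈ A := by
  intro k
  induction k with
  | zero =>
    intro s h
    unfold chain at h
    split_ifs at h with hc
    · exact (Option.some_injective _ h) ▸ (pickMax_mem r _ hc).1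
  | succ k ih =>
    intro s h
    unfold chain at h
    obtain ⟨s₀, hs₀, hstep⟩ := Option.bind_eq_some_iff.mp h
    obtain ⟨q, _, _, hmem, _⟩ := stepv_eq_some l r hstep
    exact hmem.1

lemma chain_growth {A : Set V} {k : ℕ} {s s' : V} (h1 : chain l r A k = some s)
    (h2 : chain l r A (k+1) = some s') : r s < r s' := by
  unfold chain at h2
  rw [h1, Option.bind_some] at h2
  obtain ⟨q, _, hq, hmem, _⟩ := stepv_eq_some l r h2
  exact lt_of_lt_of_le hq hmem.2.2

lemma chain_some_mono {A : Set V} {k : ℕ} {s' : V} (h : chain l r A (k+1) = some s') :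
    ∃ s, chain l r A k = some s := by
  unfold chain at h
  obtain ⟨s₀, hs₀, _⟩ := Option.bind_eq_some_iff.mp h
  exact ⟨s₀, hs₀⟩

lemma chain_lt {A : Set V} : ∀ {k j : ℕ} {sj sk : V}, j < k → chain l r A j = some sj →
    chain l r A k = some sk → r sj < r sk := by
  intro k
  induction k with
  | zero => omega
  | succ k ih =>
    intro j sj sk hjk hj hk
    rcases eq_or_lt_of_le (Nat.lt_succ_iff.mp hjk) with rfl | hlt
    · exact chain_growth l r hj hk
    · obtain ⟨s₀, hs₀⟩ := chain_some_mono l r hk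
      exact lt_trans (ih hlt hj hs₀) (chain_growth l r hs₀ hk)

lemma chain_inj {A : Set V} {j k : ℕ} {s : V} (hj : chain l r A j = some s)
    (hk : chain l r A k = some s) : j = k := by
  rcases lt_trichotomy j k with h | h | h
  · exact absurd (chain_lt l r h hj hk) (lt_irrefl _)
  · exact h
  · exact absurd (chain_lt l r h hk hj) (lt_irrefl _)

lemma chain_le {A : Set V} : ∀ {k : ℕ} {s : V}, chain l r A k = some s → k ≤ r s := by
  intro k
  induction k with
  | zero => intro s _; exact Nat.zero_le _
  | succ k ih =>
    intro s h
    obtain ⟨s₀, hs₀⟩ := chain_some_mono l r h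
    have := chain_growth l r hs₀ h
    have := ih hs₀
    omega

lemma chain_some_of_le {A : Set V} : ∀ {k j : ℕ} {s : V}, j ≤ k → chain l r A k = some s →
    ∃ s', chain l r A j = some s' := by
  intro k
  induction k with
  | zero => intro j s hj h; exact Nat.le_zero.mp hj ▸ ⟨s, h⟩
  | succ k ih =>
    intro j s hj h
    rcases eq_or_lt_of_le hj with rfl | hlt
    · exact ⟨s, h⟩
    · obtain ⟨s₀, hs₀⟩ := chain_some_mono l r h
      exact ih (Nat.lt_succ_iff.mp hlt) hs₀

lemma chain_none_exists (A : Set V) : ∃ k, chain l r A k = none := by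
  classical
  set N := (Finset.univ : Finset V).sup r with hN
  refine ⟨N + 1, ?_⟩
  cases hc : chain l r A (N+1) with
  | none => rfl
  | some s =>
    have h1 := chain_le l r hc
    have h2 : r s ≤ N := Finset.le_sup (Finset.mem_univ s)
    omega

end LRankAux
namespace LRankAux

variable {V : Type*} [Fintype V] (l r : V → ℕ)

def rhoSet (A : Set V) (w : V) : Set ℕ :=
  {a | chain l r A a = none ∨ ∃ s, chain l r A a = some s ∧ r w ≤ r s}

lemma rhoSet_nonempty (A : Set V) (w : V) : (rhoSet l r A w).Nonempty := by
  obtain ⟨k, hk⟩ := chain_none_exists l r A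
  exact ⟨k, Or.inl hk⟩

noncomputable def rho (A : Set V) (w : V) : ℕ := sInf (rhoSet l r A w)

lemma rho_mem (A : Set V) (w : V) : rho l r A w ∈ rhoSet l r A w :=
  Nat.sInf_mem (rhoSet_nonempty l r A w)

lemma rho_chain {A : Set V} {k : ℕ} {s : V} (hk : chain l r A k = some s) :
    rho l r A s = k := by
  have hub : rho l r A s ≤ k := Nat.sInf_le (Or.inr ⟨s, hk, le_rfl⟩)
  rcases eq_or_lt_of_le hub with h | h
  · exact h
  · exfalso
    rcases rho_mem l r A s with hnone | ⟨s', hs', hle⟩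
    · obtain ⟨s₀, hs₀⟩ := chain_some_of_le l r (le_of_lt h) hk
      rw [hs₀] at hnone; simp at hnone
    · exact absurd (chain_lt l r h hs' hk) (by omega)

lemma stepv_max {A : Set V} {s s' w : V} (h : stepv l r A s = some s') (hw : w ∈ A)
    (hlw : l w ≤ r s) : r w ≤ r s' := by
  obtain ⟨q, _, hq, hmem, hmax⟩ := stepv_eq_some l r h
  rcases le_or_gt q (r w) with h1 | h1
  · exact hmax w ⟨hw, by omega, h1⟩
  · have h2 : q ≤ r (s') := hmem.2.2
    omega

lemma rho_adj {A : Set V} {u v : V} (hv : v ∈ A) (hlv : l v ≤ r u) :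
    rho l r A v ≤ rho l r A u + 1 := by
  rcases rho_mem l r A u with hnone | ⟨s, hs, hle⟩
  · exact le_trans (Nat.sInf_le (Or.inl hnone)) (Nat.le_succ _)
  · have hsucc : chain l r A (rho l r A u + 1) = (stepv l r A s) := by
      show (chain l r A (rho l r A u)).bind _ = _
      rw [hs, Option.bind_some]
    cases hst : stepv l r A s with
    | none => exact Nat.sInf_le (Or.inl (hsucc.trans hst))
    | some s' =>
      refine Nat.sInf_le (Or.inr ⟨s', hsucc.trans hst, ?_⟩)
      exact stepv_max l r hst hv (le_trans hlv hle)

lemma rho_walk {G : SimpleGraph V} (hadj : ∀ a b, G.Adj a b → l b ≤ r a) {A : Set V} :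
    ∀ {u v : V} (p : G.Walk u v), (∀ w ∈ p.support, w ∈ A) →
      rho l r A v ≤ rho l r A u + p.length := by
  intro u v p
  induction p with
  | nil => intro _; simp
  | @cons a b c h q ih =>
    intro hsupp
    have hb : b ∈ A := hsupp b (by simp [SimpleGraph.Walk.support_cons, SimpleGraph.Walk.start_mem_support])
    have h1 := ih (fun w hw => hsupp w (by simp [SimpleGraph.Walk.support_cons]; tauto))
    have h2 := rho_adj l r hb (hadj a b h)
    simp only [SimpleGraph.Walk.length_cons]
    omega

end LRankAux
namespace LRankAux

variable {V : Type*} [Fintype V] (l r : V → ℕ)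

def Sset (A : Set V) : Set V := {v | ∃ k, chain l r A k = some v}

lemma width_reduce (hlr : ∀ v, l v ≤ r v) (t : ℕ) (A : Set V)
    (hA : ∀ y, (bagSet l r A y).ncard ≤ t + 2) (x : ℕ) :
    (bagSet l r (A \ Sset l r A) x).ncard ≤ t + 1 := by
  have hsub : bagSet l r (A \ Sset l r A) x ⊆ bagSet l r A x :=
    fun v hv => ⟨hv.1.1, hv.2⟩
  by_cases hhit : ∃ s ∈ bagSet l r A x, s ∈ Sset l r A
  · obtain ⟨s, hsbag, hsS⟩ := hhit
    have hsub2 : bagSet l r (A \ Sset l r A) x ⊆ bagSet l r A x \ {s} := by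
      intro v hv
      refine ⟨hsub hv, ?_⟩
      simp only [Set.mem_singleton_iff]
      rintro rfl
      exact hv.1.2 hsS
    have h1 := Set.ncard_le_ncard hsub2 (Set.toFinite _)
    rw [Set.ncard_diff_singleton_of_mem hsbag] at h1
    have := hA x
    omega
  · rcases Set.eq_empty_or_nonempty (bagSet l r A x) with hemp | ⟨v₀, hv₀⟩
    · have : bagSet l r (A \ Sset l r A) x = ∅ := Set.eq_empty_of_subset_empty (hemp ▸ hsub)
      simp [this]
    · have hAne : A.Nonempty := ⟨v₀, hv₀.1⟩
      obtain ⟨s₀, hs₀, hs₀min⟩ := chain_zero l r hlr hAne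
      set T : Set ℕ := {a | ∃ s, chain l r A a = some s ∧ l s ≤ x} with hT
      have hTne : T.Nonempty := ⟨0, s₀, hs₀, le_trans (hs₀min v₀ hv₀.1) hv₀.2.1⟩
      have hTbdd : BddAbove T := by
        refine ⟨(Finset.univ : Finset V).sup r, ?_⟩
        rintro a ⟨s, hs, -⟩
        exact le_trans (chain_le l r hs) (Finset.le_sup (Finset.mem_univ s))
      obtain ⟨s', hs', hls'⟩ := Nat.sSup_mem hTne hTbdd
      have hrs' : r s' < x := by
        by_contra hcon
        push_neg at hcon
        exact hhit ⟨s', ⟨chain_mem l r hs', hls', hcon⟩, sSup T, hs'⟩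
      have hkey : ∀ v ∈ bagSet l r A x, l v ≤ r s' := by
        intro v hv
        by_contra hcon
        push_neg at hcon
        obtain ⟨s'', hs''⟩ := stepv_progress l r hlr hv.1 hcon
        have hchain : chain l r A (sSup T + 1) = some s'' := by
          show (chain l r A (sSup T)).bind _ = _
          rw [hs', Option.bind_some, hs'']
        obtain ⟨q, hqmin, hq, hqmem, -⟩ := stepv_eq_some l r hs''
        have : sSup T + 1 ∈ T :=
          ⟨s'', hchain, le_trans hqmem.2.1 (le_trans (hqmin v hv.1 hcon) hv.2.1)⟩
        have := le_csSup hTbdd this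
        omega
      have hins : insert s' (bagSet l r A x) ⊆ bagSet l r A (r s') := by
        rintro v (rfl | hv)
        · exact ⟨chain_mem l r hs', hlr _, le_rfl⟩
        · exact ⟨hv.1, hkey v hv, by have := hv.2.2; omega⟩
      have hnotmem : s' ∉ bagSet l r A x := fun h => by have := h.2.2; omega
      have h1 := Set.ncard_le_ncard hins (Set.toFinite _)
      rw [Set.ncard_insert_of_notMem hnotmem (Set.toFinite _)] at h1
      have h2 := hA (r s')
      have h3 := Set.ncard_le_ncard hsub (Set.toFinite _)
      omega

end LRankAux
namespace LRankAux

variable {V : Type*} [Fintype V] (l r : V → ℕ)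

lemma main {G : SimpleGraph V} (hlr : ∀ v, l v ≤ r v)
    (hadj : ∀ a b, G.Adj a b → l b ≤ r a) (ℓ : ℕ) :
    ∀ (t : ℕ) (A : Set V), (∀ x, (bagSet l r A x).ncard ≤ t + 1) →
      ∃ φ : V → ℕ, (∀ v ∈ A, 1 ≤ φ v ∧ φ v ≤ (ℓ+1)*t+1) ∧
        ∀ (u v : V) (p : G.Walk u v), p.IsPath → 1 ≤ p.length → p.length ≤ ℓ →
          (∀ w ∈ p.support, w ∈ A) →
          φ u ≠ φ v ∨ ∃ w ∈ p.support, φ u < φ w := by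
  intro t
  induction t with
  | zero =>
    intro A hw
    refine ⟨fun _ => 1, fun v _ => ⟨le_rfl, by simp⟩, ?_⟩
    intro u v p hp h1 h2 hsupp
    exfalso
    cases p with
    | nil => simp at h1
    | @cons _ b _ h q =>
      have hu : u ∈ A := hsupp _ (SimpleGraph.Walk.start_mem_support _)
      have hb : b ∈ A := hsupp b (by simp [SimpleGraph.Walk.support_cons])
      have hpair : ({u, b} : Set V) ⊆ bagSet l r A (max (l u) (l b)) := by
        rintro w (rfl | rfl)
        · exact ⟨hu, le_max_left _ _, max_le (hlr _) (hadj _ b h)⟩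
        · exact ⟨hb, le_max_right _ _, max_le (hadj _ _ h.symm) (hlr _)⟩
      have hcard := Set.ncard_le_ncard hpair (Set.toFinite _)
      rw [Set.ncard_pair h.ne] at hcard
      have := hw (max (l u) (l b))
      omega
  | succ t ih =>
    intro A hw
    classical
    obtain ⟨φ', hb', hr'⟩ := ih (A \ Sset l r A) (width_reduce l r hlr t A hw)
    set c := (ℓ+1)*t with hc
    have hc2 : (ℓ+1)*(t+1)+1 = c + ℓ + 2 := by rw [hc]; ring
    set b := c + 2 with hbdef
    set φ : V → ℕ := fun v =>
      if h : v ∈ Sset l r A then b + (Classical.choose h) % (ℓ+1) else φ' v with hφ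
    have hphiS : ∀ {k : ℕ} {s : V}, chain l r A k = some s → φ s = b + k % (ℓ+1) := by
      intro k s hk
      have hs : s ∈ Sset l r A := ⟨k, hk⟩
      have hck : Classical.choose hs = k := chain_inj l r (Classical.choose_spec hs) hk
      simp only [hφ, dif_pos hs, hck]
    have hphiN : ∀ {v : V}, v ∉ Sset l r A → φ v = φ' v := by
      intro v hv; simp only [hφ, dif_neg hv]
    have hSbound : ∀ v, v ∈ Sset l r A → b ≤ φ v ∧ φ v ≤ b + ℓ := by
      intro v hv
      obtain ⟨k, hk⟩ := hv
      rw [hphiS hk]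
      have : k % (ℓ+1) < ℓ+1 := Nat.mod_lt _ (by omega)
      omega
    refine ⟨φ, ?_, ?_⟩
    · intro v hv
      by_cases hvS : v ∈ Sset l r A
      · have := hSbound v hvS; omega
      · rw [hphiN hvS]
        have := hb' v ⟨hv, hvS⟩
        omega
    · intro u v p hp h1 h2 hsupp
      rcases eq_or_ne u v with rfl | huv
      · rw [SimpleGraph.Walk.isPath_iff_eq_nil] at hp
        subst hp; simp at h1
      have huA : u ∈ A := hsupp _ p.start_mem_support
      have hvA : v ∈ A := hsupp _ p.end_mem_support
      by_cases hu : u ∈ Sset l r A <;> by_cases hv : v ∈ Sset l r A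
      · by_cases heq : φ u = φ v
        · exfalso
          obtain ⟨ku, hku⟩ := hu
          obtain ⟨kv, hkv⟩ := hv
          rw [hphiS hku, hphiS hkv] at heq
          have hmod : ku % (ℓ+1) = kv % (ℓ+1) := by omega
          have hkne : ku ≠ kv := by
            rintro rfl
            rw [hku] at hkv
            exact huv (Option.some_injective _ hkv)
          have hrhu : rho l r A u = ku := rho_chain l r hku
          have hrhv : rho l r A v = kv := rho_chain l r hkv
          rcases Nat.lt_or_ge ku kv with hlt | hge
          · have hwalk := rho_walk l r hadj p hsupp
            rw [hrhu, hrhv] at hwalk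
            have hdvd : (ℓ+1) ∣ kv - ku := (Nat.modEq_iff_dvd' hlt.le).mp hmod
            have := Nat.le_of_dvd (by omega) hdvd
            omega
          · have hlt : kv < ku := by omega
            have hwalk := rho_walk l r hadj p.reverse
              (fun w hw => hsupp w (by rwa [SimpleGraph.Walk.support_reverse, List.mem_reverse] at hw))
            rw [SimpleGraph.Walk.length_reverse, hrhu, hrhv] at hwalk
            have hdvd : (ℓ+1) ∣ ku - kv := (Nat.modEq_iff_dvd' hlt.le).mp hmod.symm
            have := Nat.le_of_dvd (by omega) hdvd
            omega
        · exact Or.inl heq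
      · refine Or.inl ?_
        have h3 := (hSbound u hu).1
        have h4 := (hb' v ⟨hvA, hv⟩).2
        rw [hphiN hv]
        omega
      · refine Or.inl ?_
        have h3 := (hSbound v hv).1
        have h4 := (hb' u ⟨huA, hu⟩).2
        rw [hphiN hu]
        omega
      · by_cases hS : ∃ w ∈ p.support, w ∈ Sset l r A
        · obtain ⟨w, hwmem, hwS⟩ := hS
          refine Or.inr ⟨w, hwmem, ?_⟩
          have h3 := (hSbound w hwS).1
          have h4 := (hb' u ⟨huA, hu⟩).2
          rw [hphiN hu]
          omega
        · push_neg at hS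
          have hsupp' : ∀ w ∈ p.support, w ∈ A \ Sset l r A :=
            fun w hw => ⟨hsupp w hw, hS w hw⟩
          rcases hr' u v p hp h1 h2 hsupp' with h | ⟨w, hw, hlt⟩
          · exact Or.inl (by rw [hphiN hu, hphiN hv]; exact h)
          · exact Or.inr ⟨w, hw, by rw [hphiN hu, hphiN (hS w hw)]; exact hlt⟩

end LRankAux
namespace LRankAux

lemma pg_ivt {n : ℕ} : ∀ {a b : Fin n} (p : (SimpleGraph.pathGraph n).Walk a b) (c : Fin n),
    a ≤ c → c ≤ b → c ∈ p.support := by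
  intro a b p
  induction p with
  | nil =>
    intro c h1 h2
    simp [le_antisymm h1 h2]
  | @cons x y z h q ih =>
    intro c h1 h2
    by_cases hca : c = x
    · subst hca; exact SimpleGraph.Walk.start_mem_support _
    · have hlt : x < c := lt_of_le_of_ne h1 (Ne.symm hca)
      have hadj := (SimpleGraph.pathGraph_adj).mp h
      have hyc : y ≤ c := by
        rw [Fin.le_def]
        rw [Fin.lt_def] at hlt
        rcases hadj with h' | h' <;> omega
      rw [SimpleGraph.Walk.support_cons]
      exact List.mem_cons_of_mem _ (ih c hyc h2)

end LRankAux


lemma LRankAux.exists_ranking {V : Type*} [Fintype V] (G : SimpleGraph V) (ℓ : ℕ)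
    (hℓ : 1 ≤ ℓ) (n : ℕ) (D : TreeDecomp G (SimpleGraph.pathGraph n)) (t : ℕ)
    (hwid : ∀ x, (D.bag x).ncard ≤ t + 1) :
    ∃ φ : V → ℕ, IsLRanking G ℓ φ ∧ ∀ v, φ v ∈ Finset.Icc 1 ((ℓ+1)*t+1) := by
  classical
  set Pos : V → Set ℕ := fun v => {x | ∃ h : x < n, v ∈ D.bag ⟨x, h⟩} with hPos
  have hpos : ∀ v, (Pos v).Nonempty := by
    intro v
    obtain ⟨⟨x, hx⟩⟩ := (D.subtree v).nonempty
    exact ⟨x.val, x.isLt, by rw [Fin.eta]; exact hx⟩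
  have hbdd : ∀ v, BddAbove (Pos v) := by
    intro v
    refine ⟨n, ?_⟩
    rintro y ⟨hy, -⟩
    exact hy.le
  set l : V → ℕ := fun v => sInf (Pos v) with hl
  set r : V → ℕ := fun v => sSup (Pos v) with hr
  have hlmem : ∀ v, l v ∈ Pos v := fun v => Nat.sInf_mem (hpos v)
  have hrmem : ∀ v, r v ∈ Pos v := fun v => Nat.sSup_mem (hpos v) (hbdd v)
  have hlr : ∀ v, l v ≤ r v := fun v => le_csSup (hbdd v) (hlmem v)
  have hint : ∀ v x, l v ≤ x → x ≤ r v → x ∈ Pos v := by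
    intro v x h1 h2
    obtain ⟨hrn, hrbag⟩ := hrmem v
    obtain ⟨hln, hlbag⟩ := hlmem v
    have hxn : x < n := by omega
    have hreach := ((D.subtree v).preconnected) ⟨⟨l v, hln⟩, hlbag⟩ ⟨⟨r v, hrn⟩, hrbag⟩
    obtain ⟨p⟩ := hreach
    let F : ((SimpleGraph.pathGraph n).induce {y | v ∈ D.bag y}) →g (SimpleGraph.pathGraph n) :=
      ⟨Subtype.val, fun {a b} h => h⟩
    have hc : (⟨x, hxn⟩ : Fin n) ∈ (p.map F).support := by
      refine pg_ivt _ _ ?_ ?_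
      · show (⟨l v, hln⟩ : Fin n) ≤ ⟨x, hxn⟩
        rw [Fin.mk_le_mk]; exact h1
      · show (⟨x, hxn⟩ : Fin n) ≤ ⟨r v, hrn⟩
        rw [Fin.mk_le_mk]; exact h2
    rw [SimpleGraph.Walk.support_map] at hc
    obtain ⟨y, hy, hyx⟩ := List.mem_map.mp hc
    exact ⟨hxn, by rw [← hyx]; exact y.2⟩
  have hadjG : ∀ a b, G.Adj a b → l b ≤ r a := by
    intro a b h
    obtain ⟨x, hxa, hxb⟩ := D.covers h
    have h1 : x.val ∈ Pos a := ⟨x.isLt, by rw [Fin.eta]; exact hxa⟩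
    have h2 : x.val ∈ Pos b := ⟨x.isLt, by rw [Fin.eta]; exact hxb⟩
    exact le_trans (Nat.sInf_le h2) (le_csSup (hbdd a) h1)
  have hwidth : ∀ x, (bagSet l r Set.univ x).ncard ≤ t + 1 := by
    intro x
    by_cases hx : x < n
    · have hsub : bagSet l r Set.univ x ⊆ D.bag ⟨x, hx⟩ := by
        rintro v ⟨-, h1, h2⟩
        obtain ⟨h3, h4⟩ := hint v x h1 h2
        exact h4
      exact le_trans (Set.ncard_le_ncard hsub (Set.toFinite _)) (hwid _)
    · have hempty : bagSet l r Set.univ x = ∅ := by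
        refine Set.eq_empty_iff_forall_notMem.mpr ?_
        rintro v ⟨-, -, h2⟩
        obtain ⟨hrn, -⟩ := hrmem v
        omega
      simp [hempty]
  obtain ⟨φ, hbnd, hrank⟩ := LRankAux.main l r hlr hadjG ℓ t Set.univ hwidth
  refine ⟨φ, ?_, ?_⟩
  · intro u v p hp h1 h2
    exact hrank u v p hp h1 h2 (fun w _ => Set.mem_univ w)
  · intro v
    have := hbnd v (Set.mem_univ v)
    exact Finset.mem_Icc.mpr ⟨this.1, this.2⟩

/-- `χ_ℓ(G) ≤ (ℓ+1)·pw(G) + 1`. -/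
theorem ranking_le_pathwidth {V : Type*} [Fintype V] (G : SimpleGraph V) (ℓ : ℕ)
    (hℓ : 1 ≤ ℓ) :
    rankingNumber G ℓ ≤ (ℓ + 1) * pathwidth G + 1 := by
  classical
  have hne : HasPathwidthAtMost G (Fintype.card V) := by
    refine ⟨1, ⟨fun _ => Set.univ, ?_, ?_⟩, ?_⟩
    · intro v
      rw [SimpleGraph.connected_iff]
      constructor
      · intro x y
        have hxy : x = y := Subsingleton.elim x y
        rw [hxy]
      · exact ⟨⟨0, Set.mem_univ v⟩⟩
    · intro u v _
      exact ⟨0, Set.mem_univ u, Set.mem_univ v⟩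
    · intro x
      rw [Set.ncard_univ, Nat.card_eq_fintype_card]
      omega
  have hmem : HasPathwidthAtMost G (pathwidth G) := Nat.sInf_mem (s := {t | HasPathwidthAtMost G t}) ⟨_, hne⟩
  obtain ⟨n, D, hwid⟩ := hmem
  obtain ⟨φ, hrank, hbnd⟩ := LRankAux.exists_ranking G ℓ hℓ n D (pathwidth G) hwid
  exact Nat.sInf_le ⟨φ, hrank, hbnd⟩
end

section
/- For any path P of n vertices and any integer ℓ ≥ 1, P has an ℓ-ranking using at most ⌈log₂(ℓ+1)⌉ + 1 colours; in particular χ_ℓ(P) ≤ ℓ + 1. -/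
open SimpleGraph

/-- The colouring used for the path: colour `c+1` on multiples of `2^c`, otherwise
valuation plus one. -/
noncomputable def pathColour (c i : ℕ) : ℕ :=
  if 2 ^ c ∣ (i + 1) then c + 1 else padicValNat 2 (i + 1) + 1

private lemma walk_mem_support {n : ℕ} {u v : Fin n} (p : (pathGraph n).Walk u v) :
    ∀ w : Fin n, min (u : ℕ) (v : ℕ) ≤ (w : ℕ) → (w : ℕ) ≤ max (u : ℕ) (v : ℕ) →
      w ∈ p.support := by
  induction p with
  | nil =>
    intro w h1 h2
    simp only [min_self, max_self] at h1 h2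
    have h3 : w = _ := Fin.ext (le_antisymm h2 h1)
    simp [h3]
  | @cons a b c h q ih =>
    intro w h1 h2
    rcases eq_or_ne w a with rfl | hw
    · simp
    · have hadj := (pathGraph_adj).mp h
      have hwa : (w : ℕ) ≠ (a : ℕ) := fun hh => hw (Fin.ext hh)
      have h1' : min (b : ℕ) (c : ℕ) ≤ (w : ℕ) := by omega
      have h2' : (w : ℕ) ≤ max (b : ℕ) (c : ℕ) := by omega
      simp [Walk.support_cons, ih w h1' h2']

private lemma dist_le_length {n : ℕ} {u v : Fin n} (p : (pathGraph n).Walk u v) :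
    Nat.dist (u : ℕ) (v : ℕ) ≤ p.length := by
  induction p with
  | nil => simp [Nat.dist_self]
  | @cons a b c h q ih =>
    have hadj := (pathGraph_adj).mp h
    have htri := Nat.dist.triangle_inequality (a : ℕ) (b : ℕ) (c : ℕ)
    simp only [Walk.length_cons]
    simp only [Nat.dist] at *
    omega

private lemma val_lemma {a b : ℕ} (ha : a ≠ 0) (hb : b ≠ 0) (hab : a < b) {t : ℕ}
    (hva : padicValNat 2 a = t) (hvb : padicValNat 2 b = t) :
    2 ^ (t + 1) ∣ a + 2 ^ t ∧ a + 2 ^ t ≤ b := by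
  obtain ⟨x, hx⟩ := pow_padicValNat_dvd (p := 2) (n := a)
  obtain ⟨y, hy⟩ := pow_padicValNat_dvd (p := 2) (n := b)
  rw [hva] at hx; rw [hvb] at hy
  have hxodd : ¬ 2 ∣ x := by
    rintro ⟨z, hz⟩
    have hdvd : 2 ^ (t + 1) ∣ a := ⟨z, by rw [hx, hz]; ring⟩
    have := (padicValNat_dvd_iff (t + 1) a).mp hdvd
    omega
  have hyodd : ¬ 2 ∣ y := by
    rintro ⟨z, hz⟩
    have hdvd : 2 ^ (t + 1) ∣ b := ⟨z, by rw [hy, hz]; ring⟩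
    have := (padicValNat_dvd_iff (t + 1) b).mp hdvd
    omega
  have hpow : 0 < 2 ^ t := Nat.pow_pos (by norm_num)
  have hxy : x < y := by
    by_contra hcon
    have : b ≤ a := by
      rw [hx, hy]; exact Nat.mul_le_mul_left _ (not_lt.mp hcon)
    omega
  obtain ⟨z, hz⟩ : 2 ∣ x + 1 := by omega
  constructor
  · refine ⟨z, ?_⟩
    have : a + 2 ^ t = 2 ^ t * (x + 1) := by rw [hx]; ring
    rw [this, hz]; ring
  · have hx1y : x + 1 ≤ y := hxy
    calc a + 2 ^ t = 2 ^ t * (x + 1) := by rw [hx]; ring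
      _ ≤ 2 ^ t * y := Nat.mul_le_mul_left _ hx1y
      _ = b := hy.symm

private lemma pathColour_pos (c i : ℕ) : 1 ≤ pathColour c i := by
  unfold pathColour; split <;> omega

private lemma val_lt_of_not_dvd {c i : ℕ} (h : ¬ 2 ^ c ∣ (i + 1)) :
    padicValNat 2 (i + 1) < c := by
  by_contra hcon
  exact h ((padicValNat_dvd_iff c (i + 1)).mpr (Or.inr (not_lt.mp hcon)))

private lemma pathColour_le (c i : ℕ) : pathColour c i ≤ c + 1 := by
  unfold pathColour
  split
  · exact le_refl _
  · have := val_lt_of_not_dvd (by assumption : ¬ 2 ^ c ∣ (i + 1))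
    omega

/-- Any path on `n` vertices has an `ℓ`-ranking using at most `⌈log₂(ℓ+1)⌉ + 1` colours;
in particular `χ_ℓ(P) ≤ ℓ + 1`. -/
theorem ranking_of_path (n ℓ : ℕ) (hℓ : 1 ≤ ℓ) :
    (∃ φ : Fin n → ℕ, IsLRanking (SimpleGraph.pathGraph n) ℓ φ ∧
        ∀ v, φ v ∈ Finset.Icc 1 (Nat.clog 2 (ℓ + 1) + 1)) ∧
      rankingNumber (SimpleGraph.pathGraph n) ℓ ≤ ℓ + 1 := by
  set c : ℕ := Nat.clog 2 (ℓ + 1) with hc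
  set φ : Fin n → ℕ := fun v => pathColour c (v : ℕ) with hφdef
  have hpowc : ℓ + 1 ≤ 2 ^ c := Nat.le_pow_clog (by norm_num) _
  -- key step: between equal-coloured vertices there is a larger colour
  have key : ∀ x y : Fin n, (x : ℕ) < (y : ℕ) → (y : ℕ) - (x : ℕ) ≤ ℓ → φ x = φ y →
      ∃ m : Fin n, (x : ℕ) ≤ (m : ℕ) ∧ (m : ℕ) ≤ (y : ℕ) ∧ φ x < φ m := by
    intro x y hxy hd hφeq
    by_cases hdx : 2 ^ c ∣ ((x : ℕ) + 1)
    · by_cases hdy : 2 ^ c ∣ ((y : ℕ) + 1)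
      · exfalso
        have hsub : 2 ^ c ∣ ((y : ℕ) + 1) - ((x : ℕ) + 1) := Nat.dvd_sub hdy hdx
        have h1 : ((y : ℕ) + 1) - ((x : ℕ) + 1) = (y : ℕ) - (x : ℕ) := by omega
        rw [h1] at hsub
        have := Nat.le_of_dvd (by omega) hsub
        omega
      · exfalso
        have hlt := val_lt_of_not_dvd hdy
        simp only [hφdef, pathColour, if_pos hdx, if_neg hdy] at hφeq
        omega
    · by_cases hdy : 2 ^ c ∣ ((y : ℕ) + 1)
      · exfalso
        have hlt := val_lt_of_not_dvd hdx
        simp only [hφdef, pathColour, if_pos hdy, if_neg hdx] at hφeq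
        omega
      · -- both not divisible: equal valuations
        set t := padicValNat 2 ((x : ℕ) + 1) with ht
        have htc : t < c := val_lt_of_not_dvd hdx
        have hvy : padicValNat 2 ((y : ℕ) + 1) = t := by
          simp only [hφdef, pathColour, if_neg hdx, if_neg hdy] at hφeq
          omega
        obtain ⟨hdvd, hle⟩ := val_lemma (a := (x : ℕ) + 1) (b := (y : ℕ) + 1)
          (by omega) (by omega) (by omega) ht.symm hvy
        have hmlt : (x : ℕ) + 2 ^ t < n := lt_of_le_of_lt (by omega) y.isLt
        refine ⟨⟨(x : ℕ) + 2 ^ t, hmlt⟩, by simp, by simp; omega, ?_⟩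
        have hm1 : ((x : ℕ) + 2 ^ t) + 1 = ((x : ℕ) + 1) + 2 ^ t := by ring
        simp only [hφdef, pathColour, if_neg hdx]
        rw [hm1]
        split
        · omega
        · have := (padicValNat_dvd_iff (t + 1) (((x : ℕ) + 1) + 2 ^ t)).mp hdvd
          omega
  have hrank : IsLRanking (SimpleGraph.pathGraph n) ℓ φ := by
    intro u v p hpath hlen1 hlenℓ
    have huv : u ≠ v := by
      rintro rfl
      rw [Walk.isPath_iff_eq_nil] at hpath
      subst hpath
      simp at hlen1
    by_cases hφeq : φ u = φ v
    · right
      have hdist := le_trans (dist_le_length p) hlenℓ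
      have huv' : (u : ℕ) ≠ (v : ℕ) := fun h => huv (Fin.ext h)
      rcases lt_or_gt_of_ne huv' with h | h
      · obtain ⟨m, h1, h2, h3⟩ := key u v h (by simp [Nat.dist] at hdist; omega) hφeq
        exact ⟨m, walk_mem_support p m (by omega) (by omega), h3⟩
      · obtain ⟨m, h1, h2, h3⟩ := key v u h (by simp [Nat.dist] at hdist; omega) hφeq.symm
        exact ⟨m, walk_mem_support p m (by omega) (by omega), by rw [hφeq]; exact h3⟩
    · exact Or.inl hφeq
  have hbound : ∀ v : Fin n, φ v ∈ Finset.Icc 1 (c + 1) := fun v =>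
    Finset.mem_Icc.mpr ⟨pathColour_pos c _, pathColour_le c _⟩
  refine ⟨⟨φ, hrank, hbound⟩, ?_⟩
  have hcℓ : c ≤ ℓ := by
    rw [hc, Nat.clog_le_iff_le_pow (by norm_num)]
    exact Nat.lt_two_pow_self
  apply Nat.sInf_le
  exact ⟨φ, hrank, fun v => Finset.mem_Icc.mpr
    ⟨pathColour_pos c _, le_trans (pathColour_le c _) (by omega)⟩⟩
end

section
/- For any path P of length at least ℓ, the ℓ-th power of K₃ ⊠ P contains a clique of order 3(ℓ+1); consequently χ̄_ℓ(K₃ ⊠ P) = 3(ℓ+1) for such P. -/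
open SimpleGraph

def IsDistColoring {V : Type*} (G : SimpleGraph V) (ℓ : ℕ) (φ : V → ℕ) : Prop :=
  ∀ ⦃u v : V⦄ (p : G.Walk u v), p.IsPath → 1 ≤ p.length → p.length ≤ ℓ → φ u ≠ φ v

noncomputable def distColoringNumber {V : Type*} (G : SimpleGraph V) (ℓ : ℕ) : ℕ :=
  sInf {k | ∃ φ : V → ℕ, IsDistColoring G ℓ φ ∧ ∀ v, φ v ∈ Finset.Icc 1 k}

def strongProd {α β : Type*} (G : SimpleGraph α) (H : SimpleGraph β) :
    SimpleGraph (α × β) where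
  Adj x y := x ≠ y ∧ (x.1 = y.1 ∨ G.Adj x.1 y.1) ∧ (x.2 = y.2 ∨ H.Adj x.2 y.2)
  symm := ⟨by
    rintro x y ⟨hne, h1, h2⟩
    exact ⟨hne.symm, h1.imp Eq.symm (fun h => h.symm), h2.imp Eq.symm (fun h => h.symm)⟩⟩
  loopless := ⟨fun x h => h.1 rfl⟩

/-- The `ℓ`-th power of `G`: vertices at (positive) distance at most `ℓ` are adjacent. -/
def graphPower {V : Type*} (G : SimpleGraph V) (ℓ : ℕ) : SimpleGraph V where
  Adj u v := u ≠ v ∧ ∃ p : G.Walk u v, p.length ≤ ℓ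
  symm := ⟨by
    rintro u v ⟨hne, p, hp⟩
    exact ⟨hne.symm, p.reverse, by simpa using hp⟩⟩
  loopless := ⟨fun u h => h.1 rfl⟩

abbrev KP (n : ℕ) := strongProd (completeGraph (Fin 3)) (SimpleGraph.pathGraph n)

lemma walk_dist {n : ℕ} {u v : Fin 3 × Fin n} (p : (KP n).Walk u v) :
    u.2.val ≤ v.2.val + p.length ∧ v.2.val ≤ u.2.val + p.length := by
  induction p with
  | nil => simp
  | cons h q ih =>
    obtain ⟨-, -, h2⟩ := id h
    rcases h2 with h2 | h2
    · rw [SimpleGraph.Walk.length_cons]; rw [h2]; omega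
    · rw [pathGraph_adj] at h2
      rw [SimpleGraph.Walk.length_cons]
      omega

lemma walk_exists {n : ℕ} (a b : Fin 3) (i j : Fin n) (k : ℕ) (hk : 0 < k)
    (hij : j.val = i.val + k) : ∃ p : (KP n).Walk (a, i) (b, j), p.length = k := by
  induction k generalizing b j with
  | zero => omega
  | succ m ih =>
    rcases Nat.eq_zero_or_pos m with hm | hm
    · subst hm
      have hadj : (KP n).Adj (a, i) (b, j) := by
        refine ⟨?_, ?_, Or.inr ?_⟩
        · intro h; have := congrArg (fun x => (Prod.snd x).val) h; simp at this; omega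
        · by_cases hab : a = b
          · exact Or.inl hab
          · exact Or.inr hab
        · rw [pathGraph_adj]; dsimp only; omega
      exact ⟨hadj.toWalk, rfl⟩
    · have hj' : i.val + m < n := by omega
      obtain ⟨p, hp⟩ := ih b ⟨i.val + m, hj'⟩ hm rfl
      have hadj : (KP n).Adj (b, (⟨i.val + m, hj'⟩ : Fin n)) (b, j) := by
        refine ⟨?_, Or.inl rfl, Or.inr ?_⟩
        · intro h; have := congrArg (fun x => (Prod.snd x).val) h; simp at this; omega
        · rw [pathGraph_adj]; simp; omega
      exact ⟨p.concat hadj, by simp [hp]⟩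

lemma power_adj {n ℓ : ℕ} (hℓ : 1 ≤ ℓ) {u v : Fin 3 × Fin n}
    (hu : u.2.val ≤ ℓ) (hv : v.2.val ≤ ℓ) (hne : u ≠ v) :
    (graphPower (KP n) ℓ).Adj u v := by
  obtain ⟨a, i⟩ := u
  obtain ⟨b, j⟩ := v
  simp only at hu hv
  refine ⟨hne, ?_⟩
  rcases lt_trichotomy i.val j.val with h | h | h
  · obtain ⟨p, hp⟩ := walk_exists a b i j (j.val - i.val) (by omega) (by omega)
    exact ⟨p, by omega⟩
  · have h2 : i = j := Fin.ext h
    have h1 : a ≠ b := fun h1 => hne (Prod.ext h1 h2)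
    have hadj : (KP n).Adj (a, i) (b, j) := ⟨hne, Or.inr h1, Or.inl h2⟩
    exact ⟨hadj.toWalk, by simpa using hℓ⟩
  · obtain ⟨p, hp⟩ := walk_exists b a j i (i.val - j.val) (by omega) (by omega)
    exact ⟨p.reverse, by simp [hp]; omega⟩

lemma clique_lemma (n ℓ : ℕ) (hℓ : 1 ≤ ℓ) (hn : ℓ + 1 ≤ n) :
    ∃ s : Finset (Fin 3 × Fin n), (graphPower (KP n) ℓ).IsNClique (3 * (ℓ + 1)) s := by
  refine ⟨Finset.image (fun p : Fin 3 × Fin (ℓ+1) => (p.1, Fin.castLE hn p.2)) Finset.univ,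
    ⟨?_, ?_⟩⟩
  · intro u hu v hv hne
    simp only [Finset.coe_image, Set.mem_image, Finset.mem_coe, Finset.mem_univ] at hu hv
    obtain ⟨p, -, rfl⟩ := hu
    obtain ⟨q, -, rfl⟩ := hv
    exact power_adj hℓ (by simpa using Nat.lt_succ_iff.mp p.2.isLt)
      (by simpa using Nat.lt_succ_iff.mp q.2.isLt) hne
  · rw [Finset.card_image_of_injective _ ?_, Finset.card_univ]
    · simp [mul_comm]
    · intro p q h
      have h1 := congrArg Prod.fst h
      have h2 := congrArg (fun x => (Prod.snd x).val) h
      simp only [Fin.coe_castLE] at h1 h2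
      exact Prod.ext h1 (Fin.ext h2)

lemma coloring_lemma (n ℓ : ℕ) :
    ∃ φ : Fin 3 × Fin n → ℕ, IsDistColoring (KP n) ℓ φ ∧
      ∀ v, φ v ∈ Finset.Icc 1 (3 * (ℓ + 1)) := by
  refine ⟨fun x => 3 * (x.2.val % (ℓ + 1)) + x.1.val + 1, ?_, ?_⟩
  · intro u v p hpath h1 h2 heq
    dsimp only at heq
    have hu3 : u.1.val < 3 := u.1.isLt
    have hv3 : v.1.val < 3 := v.1.isLt
    have hmod : u.2.val % (ℓ + 1) = v.2.val % (ℓ + 1) := by omega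
    have hd := walk_dist p
    have huv2 : u.2.val = v.2.val := by
      rcases le_total u.2.val v.2.val with h | h
      · have hdvd : (ℓ + 1) ∣ v.2.val - u.2.val :=
          (Nat.modEq_iff_dvd' h).mp hmod
        rcases Nat.eq_zero_or_pos (v.2.val - u.2.val) with h0 | h0
        · omega
        · exact absurd (Nat.le_of_dvd h0 hdvd) (by omega)
      · have hdvd : (ℓ + 1) ∣ u.2.val - v.2.val :=
          (Nat.modEq_iff_dvd' h).mp hmod.symm
        rcases Nat.eq_zero_or_pos (u.2.val - v.2.val) with h0 | h0
        · omega
        · exact absurd (Nat.le_of_dvd h0 hdvd) (by omega)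
    have huv : u = v := Prod.ext (Fin.ext (by omega)) (Fin.ext huv2)
    subst huv
    rw [(SimpleGraph.Walk.isPath_iff_eq_nil).mp hpath] at h1
    simp at h1
  · intro v
    have h1 : v.2.val % (ℓ + 1) < ℓ + 1 := Nat.mod_lt _ (by omega)
    have h2 : v.1.val < 3 := v.1.isLt
    simp only [Finset.mem_Icc]
    omega

/-- For a path of length at least `ℓ`, the `ℓ`-th power of `K₃ ⊠ P` contains a clique of
order `3(ℓ+1)`; consequently `χ̄_ℓ(K₃ ⊠ P) = 3(ℓ+1)`. -/
theorem K3_path_power_clique (n ℓ : ℕ) (hℓ : 1 ≤ ℓ) (hn : ℓ + 1 ≤ n) :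
    (∃ s : Finset (Fin 3 × Fin n),
        (graphPower (strongProd (completeGraph (Fin 3)) (SimpleGraph.pathGraph n)) ℓ).IsNClique
          (3 * (ℓ + 1)) s) ∧
      distColoringNumber
          (strongProd (completeGraph (Fin 3)) (SimpleGraph.pathGraph n)) ℓ =
        3 * (ℓ + 1) := by
  obtain ⟨s, hs⟩ := clique_lemma n ℓ hℓ hn
  refine ⟨⟨s, hs⟩, ?_⟩
  obtain ⟨φ₀, hφ₀, hmem₀⟩ := coloring_lemma n ℓ
  have hmemS : 3 * (ℓ + 1) ∈ {k | ∃ φ : Fin 3 × Fin n → ℕ,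
      IsDistColoring (KP n) ℓ φ ∧ ∀ v, φ v ∈ Finset.Icc 1 k} := ⟨φ₀, hφ₀, hmem₀⟩
  have hlow : ∀ k ∈ {k | ∃ φ : Fin 3 × Fin n → ℕ,
      IsDistColoring (KP n) ℓ φ ∧ ∀ v, φ v ∈ Finset.Icc 1 k}, 3 * (ℓ + 1) ≤ k := by
    rintro k ⟨φ, hφ, hmem⟩
    have hinj : Set.InjOn φ ↑s := by
      intro u hu v hv heq
      by_contra hne
      obtain ⟨-, p, hp⟩ := hs.1 hu hv hne
      have hb := p.bypass_isPath
      have hlen : p.bypass.length ≤ ℓ := le_trans (SimpleGraph.Walk.length_bypass_le p) hp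
      have h1 : 1 ≤ p.bypass.length := by
        rcases Nat.eq_zero_or_pos p.bypass.length with h0 | h0
        · exact absurd (SimpleGraph.Walk.eq_of_length_eq_zero h0) hne
        · exact h0
      exact hφ p.bypass hb h1 hlen heq
    have hcard := Finset.card_le_card_of_injOn φ (fun v _ => hmem v) hinj
    rw [hs.2] at hcard
    simpa using hcard
  exact le_antisymm (Nat.sInf_le hmemS) (le_csInf ⟨_, hmemS⟩ hlow)
end
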